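/- 8 ζ(1, 2̄) = ζ(3), i.e., 8 ∑_{0<k1<k2} (-1)^{k2} / (k1 k2^2) = ∑_{k≥1} 1/k^3. -/

import Mathlib

open Finset

noncomputable def H (n : ℕ) : ℝ := ∑ m ∈ Finset.range n, 1 / ((m : ℝ) + 1)

lemma H_nonneg (n : ℕ) : 0 ≤ H n := by
  apply Finset.sum_nonneg; intro i _; positivity

lemma H_succ (n : ℕ) : H (n + 1) = H n + 1 / ((n : ℝ) + 1) := by
  simp [H, Finset.sum_range_succ]

lemma H_mono {a b : ℕ} (h : a ≤ b) : H a ≤ H b := by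
  apply Finset.sum_le_sum_of_subset_of_nonneg (Finset.range_subset_range.2 h)
  intro i _ _; positivity

lemma sqrt_le_add_one (n : ℕ) : Real.sqrt n ≤ (n : ℝ) + 1 := by
  have : Real.sqrt n ≤ Real.sqrt (((n:ℝ)+1)^2) := Real.sqrt_le_sqrt (by nlinarith [Nat.cast_nonneg (α := ℝ) n])
  rwa [Real.sqrt_sq (by positivity)] at this

lemma H_le_sqrt (n : ℕ) : H n ≤ 2 * Real.sqrt n := by
  induction n with
  | zero => simp [H]
  | succ n ih =>
    rw [H_succ]
    set s := Real.sqrt n with hs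
    set t := Real.sqrt ((n:ℕ) + 1 : ℕ) with ht
    have hs0 : 0 ≤ s := Real.sqrt_nonneg _
    have ht0 : 0 ≤ t := Real.sqrt_nonneg _
    have hsq : s ^ 2 = n := Real.sq_sqrt (Nat.cast_nonneg n)
    have htq : t ^ 2 = (n : ℝ) + 1 := by
      rw [ht]; push_cast; exact Real.sq_sqrt (by positivity)
    have hle1 : s ≤ (n : ℝ) + 1 := sqrt_le_add_one n
    have hle2 : t ≤ (n : ℝ) + 1 := by
      rw [ht]; push_cast
      calc Real.sqrt ((n:ℝ)+1) ≤ Real.sqrt (((n:ℝ)+1)^2) := Real.sqrt_le_sqrt (by nlinarith [Nat.cast_nonneg (α := ℝ) n])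
      _ = (n:ℝ)+1 := Real.sqrt_sq (by positivity)
    have hpos : (0:ℝ) < (n:ℝ) + 1 := by positivity
    have key : 1 / ((n:ℝ) + 1) ≤ 2 * (t - s) := by
      rw [div_le_iff₀ hpos]
      nlinarith [sq_nonneg (t - s), sq_nonneg (t + s)]
    have : H n + 1 / ((n:ℝ)+1) ≤ 2 * s + 2 * (t - s) := by linarith
    calc H n + 1/((n:ℝ)+1) ≤ 2 * t := by linarith
    _ = 2 * Real.sqrt ((n:ℕ)+1 : ℕ) := by rw [ht]

lemma H_add (a b : ℕ) : H (a + b) = H a + ∑ j ∈ Finset.range b, 1/((a:ℝ)+(j:ℝ)+1) := by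
  induction b with
  | zero => simp
  | succ b ih =>
    rw [← Nat.add_assoc, H_succ, ih, Finset.sum_range_succ]
    push_cast
    ring

lemma hasSum_tele (m : ℕ) :
    HasSum (fun j : ℕ => 1/((j:ℝ)+1) - 1/((j:ℝ)+(m:ℝ)+1)) (H m) := by
  have hnn : ∀ j : ℕ, 0 ≤ 1/((j:ℝ)+1) - 1/((j:ℝ)+(m:ℝ)+1) := by
    intro j
    have : 1/((j:ℝ)+(m:ℝ)+1) ≤ 1/((j:ℝ)+1) := by
      apply one_div_le_one_div_of_le (by positivity)
      have : (0:ℝ) ≤ m := Nat.cast_nonneg m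
      linarith
    linarith
  rw [hasSum_iff_tendsto_nat_of_nonneg hnn]
  have hps : ∀ N : ℕ, ∑ j ∈ Finset.range N, (1/((j:ℝ)+1) - 1/((j:ℝ)+(m:ℝ)+1))
      = H m - (H (N + m) - H N) := by
    intro N
    induction N with
    | zero => simp [H]
    | succ N ih =>
      rw [Finset.sum_range_succ, ih]
      have h1 : H (N + 1 + m) = H (N + m) + 1/((N:ℝ)+(m:ℝ)+1) := by
        have : N + 1 + m = (N + m) + 1 := by ring
        rw [this, H_succ]; push_cast; ring
      rw [H_succ, h1]
      push_cast; ring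
  simp only [hps]
  have hg : Filter.Tendsto (fun N : ℕ => H (N + m) - H N) Filter.atTop (nhds 0) := by
    apply squeeze_zero (fun N => by linarith [H_mono (Nat.le_add_right N m)])
      (g := fun N : ℕ => (m : ℝ) * (1/((N:ℝ)+1)))
    · intro N
      rw [H_add]
      have : ∑ j ∈ Finset.range m, 1/((N:ℝ)+(j:ℝ)+1) ≤ ∑ _j ∈ Finset.range m, 1/((N:ℝ)+1) := by
        apply Finset.sum_le_sum
        intro j _
        apply one_div_le_one_div_of_le (by positivity)
        have : (0:ℝ) ≤ j := Nat.cast_nonneg j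
        linarith
      simp only [Finset.sum_const, Finset.card_range, nsmul_eq_mul] at this
      linarith
    · have := tendsto_one_div_add_atTop_nhds_zero_nat (𝕜 := ℝ)
      simpa using this.const_mul (m : ℝ)
  have := (tendsto_const_nhds (x := H m) (f := Filter.atTop (α := ℕ))).sub hg
  simpa using this

noncomputable def f (p : ℕ × ℕ) : ℝ :=
  1 / ((((p.1:ℝ))+1) * (((p.2:ℝ))+1) * (((p.1:ℝ))+((p.2:ℝ))+2))

lemma f_nonneg (p : ℕ × ℕ) : 0 ≤ f p := by unfold f; positivity

lemma hasSum_row (i : ℕ) :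
    HasSum (fun j : ℕ => f (i, j)) (H (i+1) / ((i:ℝ)+1)^2) := by
  have h := (hasSum_tele (i+1)).mul_left (1 / ((i:ℝ)+1)^2)
  have heq : (fun j : ℕ => 1/((i:ℝ)+1)^2 * (1/((j:ℝ)+1) - 1/((j:ℝ)+((i+1:ℕ):ℝ)+1)))
      = fun j : ℕ => f (i, j) := by
    funext j
    unfold f
    push_cast
    have h1 : ((j:ℝ)+1) ≠ 0 := by positivity
    have h2 : ((j:ℝ)+(i:ℝ)+1+1) ≠ 0 := by positivity
    have h3 : ((i:ℝ)+1) ≠ 0 := by positivity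
    field_simp
    ring
  rw [heq] at h
  rw [div_eq_mul_one_div, mul_comm]
  convert h using 1

lemma summable_rows : Summable (fun i : ℕ => H (i+1) / ((i:ℝ)+1)^2) := by
  have hb : Summable (fun i : ℕ => 2 * (1 / ((i:ℝ)+1) ^ ((3:ℝ)/2))) := by
    have h0 : Summable (fun n : ℕ => 1 / (n:ℝ) ^ ((3:ℝ)/2)) :=
      Real.summable_one_div_nat_rpow.mpr (by norm_num)
    have h1 : Summable (fun n : ℕ => 1 / ((n+1:ℕ):ℝ) ^ ((3:ℝ)/2)) :=
      (summable_nat_add_iff 1).mpr h0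
    simpa using h1.mul_left 2
  apply Summable.of_nonneg_of_le (fun i => div_nonneg (H_nonneg _) (by positivity)) _ hb
  intro i
  set x : ℝ := (i:ℝ) + 1 with hx
  have hx0 : (0:ℝ) < x := by rw [hx]; positivity
  have hH : H (i+1) ≤ 2 * Real.sqrt x := by
    have := H_le_sqrt (i+1)
    have hc : ((i+1:ℕ):ℝ) = x := by push_cast [hx]; ring
    rwa [hc] at this
  have hkey : Real.sqrt x / x ^ 2 = 1 / x ^ ((3:ℝ)/2) := by
    rw [Real.sqrt_eq_rpow]
    rw [div_eq_div_iff (by positivity) (by positivity)]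
    rw [one_mul, ← Real.rpow_add hx0,
      show (1:ℝ)/2 + 3/2 = ((2:ℕ):ℝ) by norm_num, Real.rpow_natCast]
  calc H (i+1) / x ^ 2 ≤ (2 * Real.sqrt x) / x ^ 2 := by
        apply div_le_div_of_nonneg_right hH (by positivity) |>.trans (le_refl _)
  _ = 2 * (Real.sqrt x / x ^ 2) := by ring
  _ = 2 * (1 / x ^ ((3:ℝ)/2)) := by rw [hkey]

lemma summable_f : Summable f := by
  rw [summable_prod_of_nonneg f_nonneg]
  refine ⟨fun i => (hasSum_row i).summable, ?_⟩
  have : (fun i : ℕ => ∑' j, f (i, j)) = fun i => H (i+1) / ((i:ℝ)+1)^2 := by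
    funext i; exact (hasSum_row i).tsum_eq
  rw [this]; exact summable_rows

lemma summable_wf (s : ℕ × ℕ → ℝ) (hs : ∀ p, |s p| ≤ 1) :
    Summable (fun p => s p * f p) := by
  apply Summable.of_abs
  apply Summable.of_nonneg_of_le (fun p => abs_nonneg _) _ summable_f
  intro p
  rw [abs_mul]
  calc |s p| * |f p| ≤ 1 * |f p| := by
        apply mul_le_mul_of_nonneg_right (hs p) (abs_nonneg _)
  _ = f p := by rw [one_mul, abs_of_nonneg (f_nonneg p)]

lemma tsum_rows (s : ℕ → ℝ) (hs : ∀ i, |s i| ≤ 1) :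
    ∑' p : ℕ × ℕ, s p.1 * f p = ∑' i : ℕ, s i * (H (i+1) / ((i:ℝ)+1)^2) := by
  rw [Summable.tsum_prod' (summable_wf (fun p => s p.1) (fun p => hs p.1))
    (fun i => ((hasSum_row i).summable.mul_left (s i)))]
  congr 1
  funext i
  simp only []
  rw [show (fun c : ℕ => (fun p : ℕ × ℕ => s p.1) (i, c) * f (i, c)) = fun c : ℕ => s i * f (i, c) from rfl]
  rw [tsum_mul_left, (hasSum_row i).tsum_eq]

noncomputable def g (p : ℕ × ℕ) : ℝ :=
  1 / ((((p.1:ℝ))+1) * (((p.1:ℝ))+((p.2:ℝ))+2)^2)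

lemma g_nonneg (p : ℕ × ℕ) : 0 ≤ g p := by unfold g; positivity

lemma g_le_f (p : ℕ × ℕ) : g p ≤ f p := by
  obtain ⟨i, j⟩ := p
  unfold f g
  simp only
  apply one_div_le_one_div_of_le (by positivity)
  have h1 : ((j:ℝ)+1) ≤ ((i:ℝ)+(j:ℝ)+2) := by
    have : (0:ℝ) ≤ i := Nat.cast_nonneg i
    linarith
  have h2 : (0:ℝ) < (i:ℝ)+1 := by positivity
  have h3 : (0:ℝ) < (i:ℝ)+(j:ℝ)+2 := by positivity
  nlinarith [mul_le_mul_of_nonneg_right (mul_le_mul_of_nonneg_left h1 h2.le) h3.le]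

lemma f_eq_g_add (p : ℕ × ℕ) : f p = g p + g p.swap := by
  obtain ⟨i, j⟩ := p
  unfold f g
  simp only [Prod.swap_prod_mk]
  have h1 : ((i:ℝ)+1) ≠ 0 := by positivity
  have h2 : ((j:ℝ)+1) ≠ 0 := by positivity
  have h3 : ((i:ℝ)+(j:ℝ)+2) ≠ 0 := by positivity
  have h4 : ((j:ℝ)+(i:ℝ)+2) ≠ 0 := by positivity
  field_simp
  ring

lemma summable_sg (σ : ℕ → ℝ) (hσ : ∀ k, |σ k| ≤ 1) :
    Summable (fun p : ℕ × ℕ => σ (p.1 + p.2) * g p) := by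
  apply Summable.of_abs
  apply Summable.of_nonneg_of_le (fun p => abs_nonneg _) _ summable_f
  intro p
  rw [abs_mul]
  calc |σ (p.1+p.2)| * |g p| ≤ 1 * |g p| :=
        mul_le_mul_of_nonneg_right (hσ _) (abs_nonneg _)
  _ = g p := by rw [one_mul, abs_of_nonneg (g_nonneg p)]
  _ ≤ f p := g_le_f p

lemma tsum_sym (σ : ℕ → ℝ) (hσ : ∀ k, |σ k| ≤ 1) :
    ∑' p : ℕ × ℕ, σ (p.1 + p.2) * f p = 2 * ∑' p : ℕ × ℕ, σ (p.1 + p.2) * g p := by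
  have h1 : ∀ p : ℕ × ℕ, σ (p.1+p.2) * f p
      = σ (p.1+p.2) * g p + σ (p.1+p.2) * g p.swap := by
    intro p; rw [f_eq_g_add p]; ring
  have hswap : Summable (fun p : ℕ × ℕ => σ (p.1 + p.2) * g p.swap) := by
    have := (summable_sg σ hσ).comp_injective (Equiv.prodComm ℕ ℕ).injective
    apply this.congr
    intro p
    simp [Equiv.prodComm, add_comm]
  calc ∑' p : ℕ × ℕ, σ (p.1+p.2) * f p
      = ∑' p : ℕ × ℕ, (σ (p.1+p.2) * g p + σ (p.1+p.2) * g p.swap) := by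
        exact tsum_congr h1
  _ = (∑' p : ℕ × ℕ, σ (p.1+p.2) * g p) + ∑' p : ℕ × ℕ, σ (p.1+p.2) * g p.swap :=
        Summable.tsum_add (summable_sg σ hσ) hswap
  _ = 2 * ∑' p : ℕ × ℕ, σ (p.1+p.2) * g p := by
        have : ∑' p : ℕ × ℕ, σ (p.1+p.2) * g p.swap = ∑' p : ℕ × ℕ, σ (p.1+p.2) * g p := by
          rw [← (Equiv.prodComm ℕ ℕ).tsum_eq (fun p : ℕ × ℕ => σ (p.1+p.2) * g p)]
          apply tsum_congr
          intro p
          simp [Equiv.prodComm, add_comm]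
        rw [this]; ring

noncomputable def G (σ : ℕ → ℝ) (q : ℕ × ℕ) : ℝ :=
  if q.2 ≤ q.1 then σ q.1 * (1 / ((((q.2:ℝ))+1) * (((q.1:ℝ))+2)^2)) else 0

lemma psi_inj : Function.Injective (fun p : ℕ × ℕ => (p.1 + p.2, p.1)) := by
  intro p q h
  simp only [Prod.mk.injEq] at h
  obtain ⟨h1, h2⟩ := h
  ext
  · exact h2
  · omega

lemma G_comp (σ : ℕ → ℝ) (p : ℕ × ℕ) :
    G σ (p.1 + p.2, p.1) = σ (p.1 + p.2) * g p := by
  obtain ⟨i, j⟩ := p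
  unfold G g
  simp only [le_add_iff_nonneg_right, Nat.zero_le, if_true, if_pos (Nat.le_add_right i j)]
  push_cast
  ring_nf

lemma G_vanish (σ : ℕ → ℝ) (q : ℕ × ℕ)
    (hq : q ∉ Set.range (fun p : ℕ × ℕ => (p.1 + p.2, p.1))) : G σ q = 0 := by
  obtain ⟨k, i⟩ := q
  unfold G
  simp only
  rw [if_neg]
  intro hik
  exact hq ⟨(i, k - i), by simp [Nat.add_sub_cancel' hik]⟩

lemma tsum_diag (σ : ℕ → ℝ) (hσ : ∀ k, |σ k| ≤ 1) :
    ∑' p : ℕ × ℕ, σ (p.1 + p.2) * g p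
      = ∑' k : ℕ, σ k * (H (k+1) / ((k:ℝ)+2)^2) := by
  have hinj := psi_inj
  have hsupp : Function.support (G σ) ⊆ Set.range (fun p : ℕ × ℕ => (p.1 + p.2, p.1)) := by
    intro q hq
    by_contra h
    exact hq (G_vanish σ q h)
  have hG : Summable (G σ) := by
    rw [← hinj.summable_iff (G_vanish σ)]
    exact (summable_sg σ hσ).congr (fun p => (G_comp σ p).symm)
  have h1 : ∑' p : ℕ × ℕ, σ (p.1 + p.2) * g p = ∑' q : ℕ × ℕ, G σ q :=
    (tsum_congr (fun p => (G_comp σ p).symm)).trans (hinj.tsum_eq hsupp)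
  rw [h1, Summable.tsum_prod' hG (fun k => summable_of_ne_finset_zero (s := Finset.range (k+1))
    (fun i hi => by
      unfold G
      simp only
      rw [if_neg]
      simp only [Finset.mem_range] at hi
      omega))]
  apply tsum_congr
  intro k
  rw [tsum_eq_sum (s := Finset.range (k+1)) (fun i hi => by
    unfold G
    simp only
    rw [if_neg]
    simp only [Finset.mem_range] at hi
    omega)]
  have : ∀ i ∈ Finset.range (k+1), G σ (k, i) = σ k / ((k:ℝ)+2)^2 * (1/((i:ℝ)+1)) := by
    intro i hi
    simp only [Finset.mem_range] at hi
    unfold G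
    simp only
    rw [if_pos (by omega)]
    field_simp
  rw [Finset.sum_congr rfl this, ← Finset.mul_sum]
  unfold H
  ring

lemma f_swap (i j : ℕ) : f (j, i) = f (i, j) := by
  unfold f
  simp only
  ring_nf

lemma neg_one_pow_even {n : ℕ} (h : Even n) : ((-1:ℝ))^n = 1 := h.neg_one_pow

lemma neg_one_pow_odd {n : ℕ} (h : Odd n) : ((-1:ℝ))^n = -1 := h.neg_one_pow

noncomputable def W (p : ℕ × ℕ) : ℝ :=
  (1 + (-1:ℝ)^(p.1+1)) * (1 + (-1:ℝ)^(p.2+1)) * f p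

lemma chi_inj : Function.Injective (fun q : ℕ × ℕ => (2*q.1+1, 2*q.2+1)) := by
  intro p q h
  simp only [Prod.mk.injEq] at h
  ext <;> omega

lemma W_supp : Function.support W ⊆ Set.range (fun q : ℕ × ℕ => (2*q.1+1, 2*q.2+1)) := by
  intro ⟨i, j⟩ hij
  by_contra h
  apply hij
  have hodd : ¬ (Odd i ∧ Odd j) := by
    intro ⟨⟨a, ha⟩, ⟨b, hb⟩⟩
    exact h ⟨(a, b), by simp only [Prod.mk.injEq]; omega⟩
  unfold W
  rcases (Nat.even_or_odd i) with he | ho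
  · have : ((-1:ℝ))^(i+1) = -1 := neg_one_pow_odd (he.add_one)
    simp [this]
  · rcases (Nat.even_or_odd j) with he2 | ho2
    · have : ((-1:ℝ))^(j+1) = -1 := neg_one_pow_odd (he2.add_one)
      simp [this]
    · exact absurd ⟨ho, ho2⟩ hodd

lemma W_comp (q : ℕ × ℕ) : W (2*q.1+1, 2*q.2+1) = (1/2) * f q := by
  obtain ⟨a, b⟩ := q
  unfold W f
  simp only
  have h1 : ((-1:ℝ))^(2*a+1+1) = 1 := neg_one_pow_even ⟨a+1, by omega⟩
  have h2 : ((-1:ℝ))^(2*b+1+1) = 1 := neg_one_pow_even ⟨b+1, by omega⟩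
  rw [h1, h2]
  push_cast
  have ha : ((a:ℝ)+1) ≠ 0 := by positivity
  have hb : ((b:ℝ)+1) ≠ 0 := by positivity
  have hab : ((a:ℝ)+(b:ℝ)+2) ≠ 0 := by positivity
  have h3 : ((2*a+1:ℝ)+1) ≠ 0 := by positivity
  have h4 : ((2*b+1:ℝ)+1) ≠ 0 := by positivity
  have h5 : ((2*a+1:ℝ)+(2*b+1:ℝ)+2) ≠ 0 := by positivity
  field_simp
  ring

lemma tsum_W : ∑' p : ℕ × ℕ, W p = (1/2) * ∑' p : ℕ × ℕ, f p := by
  rw [← chi_inj.tsum_eq W_supp]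
  calc ∑' q : ℕ × ℕ, W (2*q.1+1, 2*q.2+1) = ∑' q : ℕ × ℕ, (1/2) * f q :=
        tsum_congr W_comp
  _ = (1/2) * ∑' p : ℕ × ℕ, f p := tsum_mul_left

lemma summable_cube : Summable (fun n : ℕ => 1/((n:ℝ)+1)^3) := by
  have h0 : Summable (fun n : ℕ => 1/((n:ℝ))^3) := by
    have := Real.summable_one_div_nat_rpow.mpr (show (1:ℝ) < 3 by norm_num)
    apply this.congr
    intro n
    rw [show ((3:ℝ)) = ((3:ℕ):ℝ) by norm_num, Real.rpow_natCast]
  have := (summable_nat_add_iff 1).mpr h0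
  apply this.congr
  intro n
  push_cast
  norm_num

lemma summable_alt_cube : Summable (fun n : ℕ => (-1:ℝ)^n/((n:ℝ)+1)^3) := by
  apply Summable.of_abs
  apply summable_cube.congr
  intro n
  rw [abs_div, abs_pow, abs_of_nonneg (show (0:ℝ) ≤ ((n:ℝ)+1)^3 by positivity)]
  norm_num

lemma eta_eq : ∑' n : ℕ, (-1:ℝ)^n/((n:ℝ)+1)^3 = (3/4) * ∑' n : ℕ, 1/((n:ℝ)+1)^3 := by
  set u : ℕ → ℝ := fun n => (1 - (-1:ℝ)^n)/((n:ℝ)+1)^3 with hu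
  have hinj : Function.Injective (fun a : ℕ => 2*a+1) := by intro a b h; simp only [] at h; omega
  have hsupp : Function.support u ⊆ Set.range (fun a : ℕ => 2*a+1) := by
    intro n hn
    by_contra h
    apply hn
    have heven : Even n := by
      rcases Nat.even_or_odd n with he | ⟨a, ha⟩
      · exact he
      · exact absurd ⟨a, show (fun a => 2*a+1) a = n by simp only []; omega⟩ h
    rw [hu]
    simp [neg_one_pow_even heven]
  have hcomp : ∀ a : ℕ, u (2*a+1) = (1/4) * (1/((a:ℝ)+1)^3) := by
    intro a
    rw [hu]
    simp only
    have : ((-1:ℝ))^(2*a+1) = -1 := neg_one_pow_odd ⟨a, by omega⟩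
    rw [this]
    push_cast
    have : ((a:ℝ)+1) ≠ 0 := by positivity
    field_simp
    ring
  have h1 : ∑' n, u n = (1/4) * ∑' n : ℕ, 1/((n:ℝ)+1)^3 := by
    rw [← hinj.tsum_eq hsupp]
    calc ∑' a : ℕ, u (2*a+1) = ∑' a : ℕ, (1/4) * (1/((a:ℝ)+1)^3) := tsum_congr hcomp
    _ = (1/4) * ∑' n : ℕ, 1/((n:ℝ)+1)^3 := tsum_mul_left
  have h2 : ∑' n, u n = (∑' n : ℕ, 1/((n:ℝ)+1)^3) - ∑' n : ℕ, (-1:ℝ)^n/((n:ℝ)+1)^3 := by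
    rw [← Summable.tsum_sub summable_cube summable_alt_cube]
    apply tsum_congr
    intro n
    rw [hu]
    ring
  rw [h1] at h2
  linarith

lemma summable_P0 : Summable (fun n : ℕ => H n/((n:ℝ)+1)^2) := by
  apply Summable.of_nonneg_of_le (fun n => div_nonneg (H_nonneg n) (by positivity)) _ summable_rows
  intro n
  apply div_le_div_of_nonneg_right (H_mono (Nat.le_succ n)) (by positivity) |>.trans (le_refl _)

lemma summable_Z0 : Summable (fun n : ℕ => (-1:ℝ)^(n+1) * (H n/((n:ℝ)+1)^2)) := by
  apply Summable.of_abs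
  apply summable_P0.congr
  intro n
  rw [abs_mul, abs_pow, abs_neg, abs_one, one_pow, one_mul,
    abs_of_nonneg (div_nonneg (H_nonneg n) (by positivity))]

lemma summable_rows_alt : Summable (fun i : ℕ => (-1:ℝ)^(i+1) * (H (i+1)/((i:ℝ)+1)^2)) := by
  apply Summable.of_abs
  apply summable_rows.congr
  intro n
  rw [abs_mul, abs_pow, abs_neg, abs_one, one_pow, one_mul,
    abs_of_nonneg (div_nonneg (H_nonneg _) (by positivity))]

theorem eight_zeta_one_bar_two :
    8 * (∑' n : ℕ, (-1 : ℝ) ^ (n + 1) / ((n : ℝ) + 1) ^ 2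
          * ∑ m ∈ Finset.range n, 1 / ((m : ℝ) + 1))
    = ∑' k : ℕ, 1 / ((k : ℝ) + 1) ^ 3 := by
  set B := ∑' p : ℕ × ℕ, f p with hB
  set E1 := ∑' p : ℕ × ℕ, (-1:ℝ)^(p.1+1) * f p with hE1d
  set E2 := ∑' p : ℕ × ℕ, (-1:ℝ)^(p.2+1) * f p with hE2d
  set D := ∑' p : ℕ × ℕ, (-1:ℝ)^(p.1+p.2) * f p with hDd
  set P1 := ∑' i : ℕ, H (i+1)/((i:ℝ)+1)^2 with hP1d
  set Z1 := ∑' i : ℕ, (-1:ℝ)^(i+1) * (H (i+1)/((i:ℝ)+1)^2) with hZ1d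
  set P0 := ∑' n : ℕ, H n/((n:ℝ)+1)^2 with hP0d
  set Z0 := ∑' n : ℕ, (-1:ℝ)^(n+1) * (H n/((n:ℝ)+1)^2) with hZ0d
  set z3 := ∑' n : ℕ, 1/((n:ℝ)+1)^3 with hz3d
  set e3 := ∑' n : ℕ, (-1:ℝ)^n/((n:ℝ)+1)^3 with he3d
  have habs : ∀ k : ℕ, |(-1:ℝ)^k| ≤ 1 := by
    intro k; rw [abs_pow, abs_neg, abs_one, one_pow]
  have habs1 : ∀ k : ℕ, |(-1:ℝ)^(k+1)| ≤ 1 := fun k => habs (k+1)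
  have hone : ∀ k : ℕ, |(1:ℝ)| ≤ 1 := by intro k; norm_num
  -- B = P1
  have hBrows : B = P1 := by
    have h := tsum_rows (fun _ => (1:ℝ)) hone
    simp only [one_mul] at h
    exact h
  -- E1 = Z1
  have hE1 : E1 = Z1 := tsum_rows (fun i => (-1:ℝ)^(i+1)) habs1
  -- D = 2 * (shifted alternating sum)
  have hD : D = 2 * ∑' k : ℕ, (-1:ℝ)^k * (H (k+1)/((k:ℝ)+2)^2) := by
    have h := tsum_sym (fun k => (-1:ℝ)^k) habs
    rw [tsum_diag (fun k => (-1:ℝ)^k) habs] at h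
    exact h
  -- B = 2 * (shifted sum)
  have hB2 : B = 2 * ∑' k : ℕ, H (k+1)/((k:ℝ)+2)^2 := by
    have h := tsum_sym (fun _ => (1:ℝ)) hone
    rw [tsum_diag (fun _ => (1:ℝ)) hone] at h
    simp only [one_mul] at h
    exact h
  -- shift lemmas
  have hP0shift : P0 = ∑' k : ℕ, H (k+1)/((k:ℝ)+2)^2 := by
    rw [hP0d, Summable.tsum_eq_zero_add summable_P0]
    rw [show H 0 = 0 by simp [H]]
    push_cast
    norm_num
    apply tsum_congr
    intro k
    rw [show ((k:ℝ)+1+1) = (k:ℝ)+2 by ring]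
  have hZ0shift : Z0 = ∑' k : ℕ, (-1:ℝ)^k * (H (k+1)/((k:ℝ)+2)^2) := by
    rw [hZ0d, Summable.tsum_eq_zero_add summable_Z0]
    have h0 : H 0 = 0 := by simp [H]
    rw [h0]
    norm_num
    apply tsum_congr
    intro k
    push_cast
    rw [show ((k:ℝ)+1+1) = (k:ℝ)+2 by ring]
    rw [show (-1:ℝ)^(k+1+1) = (-1)^k * (-1)^2 by rw [← pow_add]]
    norm_num
  -- termwise splits
  have hP1split : P1 = P0 + z3 := by
    rw [hP1d, hP0d, hz3d, ← Summable.tsum_add summable_P0 summable_cube]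
    apply tsum_congr
    intro i
    rw [H_succ]
    have : ((i:ℝ)+1) ≠ 0 := by positivity
    field_simp
  have hZ1split : Z1 = Z0 - e3 := by
    rw [hZ1d, hZ0d, he3d, ← Summable.tsum_sub summable_Z0 summable_alt_cube]
    apply tsum_congr
    intro i
    rw [H_succ, pow_succ]
    have : ((i:ℝ)+1) ≠ 0 := by positivity
    field_simp
    ring
  -- parity relation
  have S1 : Summable (fun p : ℕ × ℕ => (-1:ℝ)^(p.1+1) * f p) :=
    summable_wf _ (fun p => habs1 p.1)
  have S2 : Summable (fun p : ℕ × ℕ => (-1:ℝ)^(p.2+1) * f p) :=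
    summable_wf _ (fun p => habs1 p.2)
  have S3 : Summable (fun p : ℕ × ℕ => (-1:ℝ)^(p.1+p.2) * f p) :=
    summable_wf _ (fun p => habs (p.1+p.2))
  have hWsplit : ∑' p : ℕ × ℕ, W p = B + (E1 + (E2 + D)) := by
    have hterm : ∀ p : ℕ × ℕ, W p
        = f p + ((-1:ℝ)^(p.1+1) * f p + ((-1:ℝ)^(p.2+1) * f p + (-1:ℝ)^(p.1+p.2) * f p)) := by
      intro ⟨i, j⟩
      unfold W
      simp only
      have hxy : ((-1:ℝ))^(i+1) * (-1)^(j+1) = (-1)^(i+j) := by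
        rw [← pow_add, show i+1+(j+1) = (i+j)+2 by ring, pow_add]
        norm_num
      linear_combination (f (i, j)) * hxy
    rw [tsum_congr hterm, Summable.tsum_add summable_f (S1.add (S2.add S3)),
      Summable.tsum_add S1 (S2.add S3), Summable.tsum_add S2 S3]
  have hE2 : E2 = E1 := by
    rw [hE1d, ← (Equiv.prodComm ℕ ℕ).tsum_eq (fun p : ℕ × ℕ => (-1:ℝ)^(p.1+1) * f p)]
    apply tsum_congr
    intro ⟨i, j⟩
    simp only [Equiv.prodComm_apply, Prod.swap_prod_mk]
    rw [f_swap]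
  have hmain : B + (E1 + (E1 + D)) = (1/2) * B := by
    rw [hE2] at hWsplit
    rw [← hWsplit, tsum_W, ← hB]
  -- numerics
  have hEta : e3 = (3/4) * z3 := eta_eq
  have hPP : P0 = z3 := by
    have h1 : B = 2 * P0 := by rw [hB2, ← hP0shift]
    have h2 : B = P0 + z3 := by rw [hBrows, hP1split]
    linarith
  have hBz : B = 2 * z3 := by
    rw [hB2, ← hP0shift, hPP]
  have hDZ : D = 2 * Z0 := by rw [hD, ← hZ0shift]
  have hE1Z : E1 = Z0 - (3/4) * z3 := by rw [hE1, hZ1split, hEta]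
  have hZ0v : Z0 = z3 / 8 := by
    rw [hDZ, hE1Z, hBz] at hmain
    linarith
  have hgoal : (∑' n : ℕ, (-1 : ℝ) ^ (n + 1) / ((n : ℝ) + 1) ^ 2
      * ∑ m ∈ Finset.range n, 1 / ((m : ℝ) + 1)) = Z0 := by
    rw [hZ0d]
    apply tsum_congr
    intro n
    rw [show (∑ m ∈ Finset.range n, 1 / ((m : ℝ) + 1)) = H n from rfl]
    ring
  rw [hgoal, hZ0v]
  ring
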